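/- Let E > 0 and m ∈ ℝ. Regard b₁ = P₃/√(2E), b₂ = L₁² + L₂², b₃ = (L₁P₂ - L₂P₁)/√(2E) as smooth functions on ℝ⁶ with coordinates (P,L), and let {f,g} = (∇f)ᵀ B (∇g) be the bracket given by the matrix B(P,L) = -[[0,P̂],[P̂,L̂]]. Then at every point (P,L) ∈ ℝ⁶ satisfying |P|² = 2E, P·L = 0 and L₃ = m, the brackets of the invariants are: {b₁,b₂} = 2b₃, {b₁,b₃} = 1 - b₁², and {b₂,b₃} = 2b₁m² + 2b₁b₂. Hence the reduced Poisson structure on ℝ³ with coordinates (b₁,b₂,b₃) is given by the tensor ∇C₃^ (the hat matrix of the gradient of C₃(b) = (1-b₁²)b₂ - b₁²m² - b₃²), and C₃ is its Casimir. -/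

import Mathlib

open Matrix

noncomputable section

/-- The cross product in `ℝ³`. -/
def cross3 (v w : Fin 3 → ℝ) : Fin 3 → ℝ :=
  ![v 1 * w 2 - v 2 * w 1, v 2 * w 0 - v 0 * w 2, v 0 * w 1 - v 1 * w 0]

/-- The dot product in `ℝ³`. -/
def dot3 (v w : Fin 3 → ℝ) : ℝ := v 0 * w 0 + v 1 * w 1 + v 2 * w 2

/-- For `v ∈ ℝ³`, the antisymmetric hat matrix with `v̂ u = v × u`. -/
def hat (v : Fin 3 → ℝ) : Matrix (Fin 3) (Fin 3) ℝ :=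
  !![0, -v 2, v 1; v 2, 0, -v 0; -v 1, v 0, 0]

/-- The Lie–Poisson structure matrix of `e*(3)`:  `B = -[[0, P̂],[P̂, L̂]]`. -/
def Bmat (P L : Fin 3 → ℝ) : Matrix (Fin 3 ⊕ Fin 3) (Fin 3 ⊕ Fin 3) ℝ :=
  - Matrix.fromBlocks 0 (hat P) (hat P) (hat L)

/-- `ℝ⁶` as a Euclidean space, first three coordinates `P`, last three `L`. -/
abbrev R6 := EuclideanSpace ℝ (Fin 3 ⊕ Fin 3)

def Pof (w : R6) : Fin 3 → ℝ := fun i => w (Sum.inl i)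

def Lof (w : R6) : Fin 3 → ℝ := fun i => w (Sum.inr i)

/-- The Lie–Poisson bracket `{f,g} = (∇f)ᵀ B (∇g)` of `e*(3)`. -/
def pbrack (f g : R6 → ℝ) (w : R6) : ℝ :=
  dotProduct (fun i => gradient f w i)
    ((Bmat (Pof w) (Lof w)).mulVec (fun i => gradient g w i))

/-- The invariant `b₁ = P₃/√(2E)`. -/
def b1fun (E : ℝ) : R6 → ℝ := fun w => Pof w 2 / Real.sqrt (2 * E)

/-- The invariant `b₂ = L₁² + L₂²`. -/
def b2fun : R6 → ℝ := fun w => (Lof w 0) ^ 2 + (Lof w 1) ^ 2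

/-- The invariant `b₃ = (L₁P₂ - L₂P₁)/√(2E)`. -/
def b3fun (E : ℝ) : R6 → ℝ := fun w =>
  (Lof w 0 * Pof w 1 - Lof w 1 * Pof w 0) / Real.sqrt (2 * E)

/-- `ℝ³` (`b`-space) as a Euclidean space. -/
abbrev E3 := EuclideanSpace ℝ (Fin 3)

/-- `C₃(b) = (1-b₁²)b₂ - b₁²m² - b₃²`. -/
def C3fun (m : ℝ) : E3 → ℝ := fun b =>
  (1 - (b 0) ^ 2) * b 1 - (b 0) ^ 2 * m ^ 2 - (b 2) ^ 2


lemma gradient_apply_eq {ι : Type*} [Fintype ι] [DecidableEq ι]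
    (f : EuclideanSpace ℝ ι → ℝ) (x : EuclideanSpace ℝ ι) (i : ι) :
    gradient f x i = fderiv ℝ f x (EuclideanSpace.single i 1) := by
  have h := (InnerProductSpace.toDual ℝ (EuclideanSpace ℝ ι)).apply_symm_apply (fderiv ℝ f x)
  have h2 : (InnerProductSpace.toDual ℝ (EuclideanSpace ℝ ι)) (gradient f x) (EuclideanSpace.single i 1) = fderiv ℝ f x (EuclideanSpace.single i 1) := by
    rw [gradient, h]
  rw [InnerProductSpace.toDual_apply_apply, EuclideanSpace.inner_single_right] at h2
  simpa using h2

lemma proj_apply' {ι : Type*} [Fintype ι] (j : ι) (v : EuclideanSpace ℝ ι) :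
    (EuclideanSpace.proj (𝕜 := ℝ) j) v = v j := rfl

lemma proj_hasFDerivAt' (w : R6) (j : Fin 3 ⊕ Fin 3) :
    HasFDerivAt (fun v : R6 => v j) (EuclideanSpace.proj j : R6 →L[ℝ] ℝ) w :=
  (EuclideanSpace.proj (𝕜 := ℝ) j).hasFDerivAt

/-- On `|P|² = 2E`, `P·L = 0`, `L₃ = m`, the invariants of the `S¹` action satisfy
`{b₁,b₂} = 2b₃`, `{b₁,b₃} = 1 - b₁²`, `{b₂,b₃} = 2b₁m² + 2b₁b₂`; these are the
entries of the reduced Poisson tensor `∇C₃^`, and `C₃` is a Casimir of the reduced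
bracket `{f,g}(b) = ∇f·(∇C₃ × ∇g)` (the scalar triple product with `∇C₃` repeated
vanishes). -/
theorem invariant_brackets (E m : ℝ) (hE : 0 < E) (w : R6)
    (hP : dot3 (Pof w) (Pof w) = 2 * E) (hPL : dot3 (Pof w) (Lof w) = 0)
    (hm : Lof w 2 = m) :
    pbrack (b1fun E) b2fun w = 2 * b3fun E w ∧
    pbrack (b1fun E) (b3fun E) w = 1 - (b1fun E w) ^ 2 ∧
    pbrack b2fun (b3fun E) w = 2 * b1fun E w * m ^ 2 + 2 * b1fun E w * b2fun w ∧
    (∀ (b : E3) (u : Fin 3 → ℝ),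
      dot3 (fun i => gradient (C3fun m) b i)
        (cross3 (fun i => gradient (C3fun m) b i) u) = 0) := by
  set c := Real.sqrt (2*E) with hc
  have hc0 : c ≠ 0 := by positivity
  have hc2 : c ^ 2 = 2 * E := Real.sq_sqrt (by linarith)
  have hsplit : Real.sqrt 2 * Real.sqrt E = c := by
    rw [hc, Real.sqrt_mul (by norm_num)]
  have h1 : HasFDerivAt (b1fun E) (c⁻¹ • (EuclideanSpace.proj (Sum.inl 2) : R6 →L[ℝ] ℝ)) w := by
    have heq : b1fun E = fun v : R6 => c⁻¹ * v (Sum.inl 2) := by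
      funext v; simp only [b1fun, Pof, div_eq_inv_mul, ← hc]
    rw [heq]; exact (proj_hasFDerivAt' w (Sum.inl 2)).const_mul c⁻¹
  have h2 : HasFDerivAt b2fun
      ((w (Sum.inr 0) • (EuclideanSpace.proj (Sum.inr 0) : R6 →L[ℝ] ℝ) + w (Sum.inr 0) • (EuclideanSpace.proj (Sum.inr 0) : R6 →L[ℝ] ℝ)) +
       (w (Sum.inr 1) • (EuclideanSpace.proj (Sum.inr 1) : R6 →L[ℝ] ℝ) + w (Sum.inr 1) • (EuclideanSpace.proj (Sum.inr 1) : R6 →L[ℝ] ℝ))) w := by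
    have heq : b2fun = fun v : R6 => v (Sum.inr 0) * v (Sum.inr 0) + v (Sum.inr 1) * v (Sum.inr 1) := by
      funext v; simp only [b2fun, Lof]; ring
    rw [heq]
    exact ((proj_hasFDerivAt' w (Sum.inr 0)).mul (proj_hasFDerivAt' w (Sum.inr 0))).add
      ((proj_hasFDerivAt' w (Sum.inr 1)).mul (proj_hasFDerivAt' w (Sum.inr 1)))
  have h3 : HasFDerivAt (b3fun E)
      (c⁻¹ • ((w (Sum.inr 0) • (EuclideanSpace.proj (Sum.inl 1) : R6 →L[ℝ] ℝ) + w (Sum.inl 1) • (EuclideanSpace.proj (Sum.inr 0) : R6 →L[ℝ] ℝ)) -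
       (w (Sum.inr 1) • (EuclideanSpace.proj (Sum.inl 0) : R6 →L[ℝ] ℝ) + w (Sum.inl 0) • (EuclideanSpace.proj (Sum.inr 1) : R6 →L[ℝ] ℝ)))) w := by
    have heq : b3fun E = fun v : R6 => c⁻¹ * (v (Sum.inr 0) * v (Sum.inl 1) - v (Sum.inr 1) * v (Sum.inl 0)) := by
      funext v; simp only [b3fun, Pof, Lof, div_eq_inv_mul, ← hc]
    rw [heq]
    exact (((proj_hasFDerivAt' w (Sum.inr 0)).mul (proj_hasFDerivAt' w (Sum.inl 1))).sub
      ((proj_hasFDerivAt' w (Sum.inr 1)).mul (proj_hasFDerivAt' w (Sum.inl 0)))).const_mul c⁻¹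
  have k1 : ∀ i, gradient (b1fun E) w i = (c⁻¹ • (EuclideanSpace.proj (Sum.inl 2) : R6 →L[ℝ] ℝ)) (EuclideanSpace.single i 1) := by
    intro i; rw [gradient_apply_eq, h1.fderiv]
  have k2 : ∀ i, gradient b2fun w i = ((w (Sum.inr 0) • (EuclideanSpace.proj (Sum.inr 0) : R6 →L[ℝ] ℝ) + w (Sum.inr 0) • (EuclideanSpace.proj (Sum.inr 0) : R6 →L[ℝ] ℝ)) +
       (w (Sum.inr 1) • (EuclideanSpace.proj (Sum.inr 1) : R6 →L[ℝ] ℝ) + w (Sum.inr 1) • (EuclideanSpace.proj (Sum.inr 1) : R6 →L[ℝ] ℝ))) (EuclideanSpace.single i 1) := by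
    intro i; rw [gradient_apply_eq, h2.fderiv]
  have k3 : ∀ i, gradient (b3fun E) w i = (c⁻¹ • ((w (Sum.inr 0) • (EuclideanSpace.proj (Sum.inl 1) : R6 →L[ℝ] ℝ) + w (Sum.inl 1) • (EuclideanSpace.proj (Sum.inr 0) : R6 →L[ℝ] ℝ)) -
       (w (Sum.inr 1) • (EuclideanSpace.proj (Sum.inl 0) : R6 →L[ℝ] ℝ) + w (Sum.inl 0) • (EuclideanSpace.proj (Sum.inr 1) : R6 →L[ℝ] ℝ)))) (EuclideanSpace.single i 1) := by
    intro i; rw [gradient_apply_eq, h3.fderiv]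
  have hPe : w (Sum.inl 0) ^ 2 + w (Sum.inl 1) ^ 2 + w (Sum.inl 2) ^ 2 = c ^ 2 := by
    rw [hc2]; simpa [dot3, Pof, sq] using hP
  have hPLe : w (Sum.inl 0) * w (Sum.inr 0) + w (Sum.inl 1) * w (Sum.inr 1) + w (Sum.inl 2) * w (Sum.inr 2) = 0 := by
    simpa [dot3, Pof, Lof] using hPL
  have hme : w (Sum.inr 2) = m := hm
  have hPLe' : w (Sum.inl 0) * w (Sum.inr 0) + w (Sum.inl 1) * w (Sum.inr 1) + w (Sum.inl 2) * m = 0 := by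
    rw [← hme]; exact hPLe
  refine ⟨?_, ?_, ?_, ?_⟩
  · simp only [pbrack, dotProduct, Matrix.mulVec, Fintype.sum_sum_type, Fin.sum_univ_three,
      k1, k2, k3, Bmat, hat, Matrix.fromBlocks, Matrix.neg_apply, Matrix.of_apply, Sum.elim_inl, Sum.elim_inr,
      ContinuousLinearMap.add_apply, ContinuousLinearMap.sub_apply, ContinuousLinearMap.smul_apply, proj_apply',
      EuclideanSpace.single_apply, smul_eq_mul]
    simp [Pof, Lof, b3fun, b1fun, b2fun, hsplit]
    field_simp
    ring
  · simp only [pbrack, dotProduct, Matrix.mulVec, Fintype.sum_sum_type, Fin.sum_univ_three,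
      k1, k2, k3, Bmat, hat, Matrix.fromBlocks, Matrix.neg_apply, Matrix.of_apply, Sum.elim_inl, Sum.elim_inr,
      ContinuousLinearMap.add_apply, ContinuousLinearMap.sub_apply, ContinuousLinearMap.smul_apply, proj_apply',
      EuclideanSpace.single_apply, smul_eq_mul]
    simp [Pof, Lof, b3fun, b1fun, b2fun, hsplit]
    field_simp
    linear_combination hPe
  · simp only [pbrack, dotProduct, Matrix.mulVec, Fintype.sum_sum_type, Fin.sum_univ_three,
      k1, k2, k3, Bmat, hat, Matrix.fromBlocks, Matrix.neg_apply, Matrix.of_apply, Sum.elim_inl, Sum.elim_inr,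
      ContinuousLinearMap.add_apply, ContinuousLinearMap.sub_apply, ContinuousLinearMap.smul_apply, proj_apply',
      EuclideanSpace.single_apply, smul_eq_mul]
    simp [Pof, Lof, b3fun, b1fun, b2fun, hsplit, hme]
    field_simp
    linear_combination (-2*m) * hPLe'
  · intro b u
    simp only [dot3, cross3, Matrix.cons_val_zero, Matrix.cons_val_one, Matrix.head_cons,
      Matrix.cons_val_two, Matrix.tail_cons]
    ring
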